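/- The four polynomials a2⁰ = I4 + Ĩ4/4 − 64·I2², b1⁰ = I2, b2⁰ = −I4/6 + Ĩ4/48 + (128/3)·I2², b3⁰ = I6/16 − 4·I2·I4 + I2·Ĩ4 + 512·I2³ in ℂ[z1,z2,z3,z4] are algebraically independent over ℂ. -/

import Mathlib

open MvPolynomial Complex

/-- `I2 = z1²+z2²+z3²+z4²` -/
noncomputable def I2 : MvPolynomial (Fin 4) ℂ := ∑ i, X i ^ 2

/-- `I4 = Σ_{i<j} zi²zj²` -/
noncomputable def I4 : MvPolynomial (Fin 4) ℂ :=
  ∑ p ∈ Finset.univ.filter (fun p : Fin 4 × Fin 4 => p.1 < p.2), X p.1 ^ 2 * X p.2 ^ 2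

/-- `I6 = Σ_{i<j<k} zi²zj²zk²` -/
noncomputable def I6 : MvPolynomial (Fin 4) ℂ :=
  ∑ p ∈ Finset.univ.filter (fun p : Fin 4 × Fin 4 × Fin 4 => p.1 < p.2.1 ∧ p.2.1 < p.2.2),
    X p.1 ^ 2 * X p.2.1 ^ 2 * X p.2.2 ^ 2

/-- `Ĩ4 = z1z2z3z4` -/
noncomputable def I4t : MvPolynomial (Fin 4) ℂ := ∏ i, X i

/-- `a2⁰ = I4 + Ĩ4/4 − 64·I2²` -/
noncomputable def a2q0 : MvPolynomial (Fin 4) ℂ := I4 + C (1 / 4 : ℂ) * I4t - C (64 : ℂ) * I2 ^ 2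

/-- `b1⁰ = I2` -/
noncomputable def b1q0 : MvPolynomial (Fin 4) ℂ := I2

/-- `b2⁰ = −I4/6 + Ĩ4/48 + (128/3)·I2²` -/
noncomputable def b2q0 : MvPolynomial (Fin 4) ℂ :=
  -(C (1 / 6 : ℂ)) * I4 + C (1 / 48 : ℂ) * I4t + C (128 / 3 : ℂ) * I2 ^ 2

/-- `b3⁰ = I6/16 − 4·I2·I4 + I2·Ĩ4 + 512·I2³` -/
noncomputable def b3q0 : MvPolynomial (Fin 4) ℂ :=
  C (1 / 16 : ℂ) * I6 - C (4 : ℂ) * I2 * I4 + I2 * I4t + C (512 : ℂ) * I2 ^ 3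

/-! ### Auxiliary material -/

section Aux

lemma hI2ex : I2 = X 0 ^ 2 + X 1 ^ 2 + X 2 ^ 2 + X 3 ^ 2 := by
  rw [I2, Fin.sum_univ_four]

lemma hI4ex : I4 = X 0 ^ 2 * X 1 ^ 2 + X 0 ^ 2 * X 2 ^ 2 + X 0 ^ 2 * X 3 ^ 2
    + X 1 ^ 2 * X 2 ^ 2 + X 1 ^ 2 * X 3 ^ 2 + X 2 ^ 2 * X 3 ^ 2 := by
  rw [I4, show Finset.univ.filter (fun p : Fin 4 × Fin 4 => p.1 < p.2) =
    {(0,1),(0,2),(0,3),(1,2),(1,3),(2,3)} from by decide]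
  simp [Finset.sum_insert]
  ring

lemma hI6ex : I6 = X 0 ^ 2 * X 1 ^ 2 * X 2 ^ 2 + X 0 ^ 2 * X 1 ^ 2 * X 3 ^ 2
    + X 0 ^ 2 * X 2 ^ 2 * X 3 ^ 2 + X 1 ^ 2 * X 2 ^ 2 * X 3 ^ 2 := by
  rw [I6, show Finset.univ.filter (fun p : Fin 4 × Fin 4 × Fin 4 => p.1 < p.2.1 ∧ p.2.1 < p.2.2) =
    {(0,1,2),(0,1,3),(0,2,3),(1,2,3)} from by decide]
  simp [Finset.sum_insert]
  ring

lemma hI4tex : I4t = X 0 * X 1 * X 2 * X 3 := by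
  rw [I4t, Fin.prod_univ_four]

lemma he1ex : esymm (Fin 4) ℂ 1 = X 0 + X 1 + X 2 + X 3 := by
  rw [esymm, show Finset.powersetCard 1 (Finset.univ : Finset (Fin 4)) =
    {{0},{1},{2},{3}} from by decide]
  simp (config := { decide := true }) [Finset.sum_insert, Finset.prod_insert]
  ring

lemma he2ex : esymm (Fin 4) ℂ 2 =
    X 0 * X 1 + X 0 * X 2 + X 0 * X 3 + X 1 * X 2 + X 1 * X 3 + X 2 * X 3 := by
  rw [esymm, show Finset.powersetCard 2 (Finset.univ : Finset (Fin 4)) =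
    {{0,1},{0,2},{0,3},{1,2},{1,3},{2,3}} from by decide]
  simp (config := { decide := true }) [Finset.sum_insert, Finset.prod_insert]
  ring

lemma he3ex : esymm (Fin 4) ℂ 3 =
    X 0 * X 1 * X 2 + X 0 * X 1 * X 3 + X 0 * X 2 * X 3 + X 1 * X 2 * X 3 := by
  rw [esymm, show Finset.powersetCard 3 (Finset.univ : Finset (Fin 4)) =
    {{0,1,2},{0,1,3},{0,2,3},{1,2,3}} from by decide]
  simp (config := { decide := true }) [Finset.sum_insert, Finset.prod_insert]
  ring

lemma he4ex : esymm (Fin 4) ℂ 4 = X 0 * X 1 * X 2 * X 3 := by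
  rw [esymm, show Finset.powersetCard 4 (Finset.univ : Finset (Fin 4)) =
    {{0,1,2,3}} from by decide]
  simp (config := { decide := true }) [Finset.sum_insert, Finset.prod_insert]
  ring

/-- Squares of the variables are algebraically independent. -/
lemma hy : AlgebraicIndependent ℂ (fun i : Fin 4 => (X i : MvPolynomial (Fin 4) ℂ) ^ 2) := by
  have := (MvPolynomial.algebraicIndependent_X (Fin 4) ℂ).polynomial_aeval_of_transcendental
    (f := fun _ => Polynomial.X ^ 2) (fun i => Polynomial.transcendental _ (by simp)
      (by simpa using one_mem (nonZeroDivisors ℂ)))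
  simpa using this

/-- The elementary symmetric polynomials `e1, e2, e3, e4` are algebraically independent. -/
lemma hesymm : AlgebraicIndependent ℂ (fun i : Fin 4 => esymm (Fin 4) ℂ (i + 1)) := by
  rw [AlgebraicIndependent]
  intro p q h
  apply esymmAlgHom_injective ℂ (n := 4) (σ := Fin 4) (by simp)
  apply Subtype.ext
  rw [esymmAlgHom_apply, esymmAlgHom_apply]
  exact h

/-- `I2, I4, I6, Ĩ4²` are algebraically independent. -/
lemma hE : AlgebraicIndependent ℂ (![I2, I4, I6, I4t ^ 2] : Fin 4 → MvPolynomial (Fin 4) ℂ) := by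
  have h := hy.aeval_of_algebraicIndependent hesymm
  have hid : (fun i : Fin 4 => aeval (fun j : Fin 4 => (X j : MvPolynomial (Fin 4) ℂ) ^ 2)
      (esymm (Fin 4) ℂ (i + 1))) = ![I2, I4, I6, I4t ^ 2] := by
    funext i
    fin_cases i <;>
    · apply MvPolynomial.funext
      intro x
      simp [he1ex, he2ex, he3ex, he4ex, hI2ex, hI4ex, hI6ex, hI4tex, Fin.sum_univ_four]
      try ring
  rwa [hid] at h

lemma trans_of_sq {F : Type*} [Field F] [Algebra ℂ F] {K : Subalgebra ℂ F} {a : F}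
    (h : Transcendental K (a ^ 2)) : Transcendental K a := by
  intro halg
  apply h
  haveI : FaithfulSMul K F :=
    (faithfulSMul_iff_algebraMap_injective K F).mpr Subtype.val_injective
  letI : Algebra (FractionRing K) F := FractionRing.liftAlgebra K F
  haveI := FractionRing.isScalarTower_liftAlgebra K F
  rw [IsFractionRing.isAlgebraic_iff K (FractionRing K) F] at halg ⊢
  exact isAlgebraic_iff_isIntegral.mpr ((isAlgebraic_iff_isIntegral.mp halg).pow 2)

lemma option_sq {F : Type*} [Field F] [Algebra ℂ F] {ι : Type*} {x : ι → F} {a : F}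
    (h : AlgebraicIndependent ℂ (fun o : Option ι => o.elim (a ^ 2) x)) :
    AlgebraicIndependent ℂ (fun o : Option ι => o.elim a x) := by
  have hx : AlgebraicIndependent ℂ x := h.comp Option.some (Option.some_injective ι)
  rw [hx.option_iff_transcendental (a ^ 2)] at h
  rw [hx.option_iff_transcendental a]
  exact trans_of_sq h

/-- `I2, I4, I6, Ĩ4` are algebraically independent. -/
lemma hw : AlgebraicIndependent ℂ (![I2, I4, I6, I4t] : Fin 4 → MvPolynomial (Fin 4) ℂ) := by
  let F := FractionRing (MvPolynomial (Fin 4) ℂ)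
  let φ : MvPolynomial (Fin 4) ℂ →ₐ[ℂ] F := IsScalarTower.toAlgHom ℂ _ F
  have hφ : Function.Injective φ := IsFractionRing.injective _ F
  have hEF : AlgebraicIndependent ℂ (φ ∘ ![I2, I4, I6, I4t ^ 2]) := hE.map' hφ
  let e : Option (Fin 3) ≃ Fin 4 := (finSuccEquivLast (n := 3)).symm
  have h1 : AlgebraicIndependent ℂ ((φ ∘ ![I2, I4, I6, I4t ^ 2]) ∘ e) := hEF.comp e e.injective
  have h2 : ((φ ∘ ![I2, I4, I6, I4t ^ 2]) ∘ e) =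
      fun o : Option (Fin 3) => o.elim ((φ I4t) ^ 2) (fun i => φ (![I2, I4, I6] i)) := by
    funext o
    cases o with
    | none => exact map_pow φ I4t 2
    | some i => fin_cases i <;> rfl
  rw [h2] at h1
  have h3 := option_sq h1
  have h4 : (fun o : Option (Fin 3) => o.elim (φ I4t) (fun i => φ (![I2, I4, I6] i))) =
      (φ ∘ ![I2, I4, I6, I4t]) ∘ e := by
    funext o
    cases o with
    | none => rfl
    | some i => fin_cases i <;> rfl
  rw [h4] at h3
  exact AlgebraicIndependent.of_comp φ ((algebraicIndependent_equiv e).mp h3)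

/-- The change-of-variables polynomials expressing `a2⁰, b1⁰, b2⁰, b3⁰` through
`I2, I4, I6, Ĩ4`. -/
noncomputable def qq : Fin 4 → MvPolynomial (Fin 4) ℂ :=
  ![X 1 + C (1 / 4 : ℂ) * X 3 - C (64 : ℂ) * X 0 ^ 2,
    X 0,
    -(C (1 / 6 : ℂ)) * X 1 + C (1 / 48 : ℂ) * X 3 + C (128 / 3 : ℂ) * X 0 ^ 2,
    C (1 / 16 : ℂ) * X 2 - C (4 : ℂ) * X 0 * X 1 + X 0 * X 3 + C (512 : ℂ) * X 0 ^ 3]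

/-- The inverse change of variables. -/
noncomputable def rr : Fin 4 → MvPolynomial (Fin 4) ℂ :=
  ![X 1,
    C (1/3 : ℂ) * X 0 + C (192 : ℂ) * X 1 ^ 2 - C (4 : ℂ) * X 2,
    C (16 : ℂ) * X 3 - C (64/3 : ℂ) * X 0 * X 1 - C (512 : ℂ) * X 1 * X 2
      + C (12288 : ℂ) * X 1 ^ 3,
    C (8/3 : ℂ) * X 0 + C (16 : ℂ) * X 2 - C (512 : ℂ) * X 1 ^ 2]

lemma hq : AlgebraicIndependent ℂ qq := by
  apply AlgebraicIndependent.of_aeval (x := rr)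
  have : (fun i => aeval rr (qq i)) = (X : Fin 4 → MvPolynomial (Fin 4) ℂ) := by
    funext i
    fin_cases i <;>
    · apply MvPolynomial.funext
      intro x
      simp [qq, rr]
      try ring
  rw [this]
  exact MvPolynomial.algebraicIndependent_X _ _

end Aux

/-- The four polynomials `a2⁰, b1⁰, b2⁰, b3⁰` are algebraically independent over ℂ. -/
theorem stmt_2 :
    AlgebraicIndependent ℂ (![a2q0, b1q0, b2q0, b3q0] : Fin 4 → MvPolynomial (Fin 4) ℂ) := by
  have h := hw.aeval_of_algebraicIndependent hq
  have hid : (fun i => aeval (![I2, I4, I6, I4t] : Fin 4 → MvPolynomial (Fin 4) ℂ) (qq i)) =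
      ![a2q0, b1q0, b2q0, b3q0] := by
    funext i
    fin_cases i <;>
    · apply MvPolynomial.funext
      intro x
      simp [qq, a2q0, b1q0, b2q0, b3q0, hI2ex, hI4ex, hI6ex, hI4tex]
      try ring
  rwa [hid] at h
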